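/- Under the bijection φ from Dyck meanders with catastrophes to restricted Dyck paths, the image of the set of Dyck paths of semilength n (meanders with no catastrophes ending at height 0, of length 2n) is exactly the set of Dyck paths of semilength 2n avoiding the factors UUU and DUD everywhere and starting with UUD (or empty). -/

import Mathlib

/-- Every prefix of the path has nonnegative sum (the path stays weakly above the x-axis). -/
def NonnegPrefixes (w : List ℤ) : Prop := ∀ p ∈ w.inits, 0 ≤ p.sum

/-- A Dyck word: steps U = 1 and D = -1, nonnegative prefixes, ending at height 0. -/
def IsDyckWord (w : List ℤ) : Prop :=
  (∀ s ∈ w, s = 1 ∨ s = -1) ∧ NonnegPrefixes w ∧ w.sum = 0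

/-- A Motzkin path: steps U = 1, F = 0, D = -1, nonnegative prefixes, ending at height 0. -/
def IsMotzkinWord (w : List ℤ) : Prop :=
  (∀ s ∈ w, s = 1 ∨ s = 0 ∨ s = -1) ∧ NonnegPrefixes w ∧ w.sum = 0

/-- A Dyck meander with catastrophes: steps U = 1, D = -1, D_i = -i (i ≥ 2),
nonnegative, and every catastrophe step D_i (i ≥ 2) lands exactly at height 0. -/
def IsDyckMeanderCat (w : List ℤ) : Prop :=
  (∀ s ∈ w, s = 1 ∨ s ≤ -1) ∧ NonnegPrefixes w ∧
    ∀ i, i < w.length → w.getD i 0 ≤ -2 → (w.take (i+1)).sum = 0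

/-- A Motzkin meander with catastrophes: steps U = 1, F = 0, D = -1, D_i = -i (i ≥ 2),
nonnegative, every catastrophe landing exactly at height 0. -/
def IsMotzkinMeanderCat (w : List ℤ) : Prop :=
  (∀ s ∈ w, s ≤ 1) ∧ NonnegPrefixes w ∧
    ∀ i, i < w.length → w.getD i 0 ≤ -2 → (w.take (i+1)).sum = 0

def IsDyckExcursionCat (w : List ℤ) : Prop := IsDyckMeanderCat w ∧ w.sum = 0

def IsMotzkinExcursionCat (w : List ℤ) : Prop := IsMotzkinMeanderCat w ∧ w.sum = 0

/-- The factor `pat` occurs in `w` starting at position `i`. -/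
def OccursAt (pat w : List ℤ) (i : ℕ) : Prop := pat <+: w.drop i

/-- `w` has no occurrence of the factor `pat`. -/
def Avoids (pat w : List ℤ) : Prop := ∀ i, ¬ OccursAt pat w i

/-- `w` has no occurrence of `pat` starting at height h > 0. -/
def AvoidsAtPosHeight (pat w : List ℤ) : Prop :=
  ∀ i, OccursAt pat w i → (w.take i).sum ≤ 0

/-- `w` has no occurrence of `pat` starting at height h ≥ 2. -/
def AvoidsAtHeightGe2 (pat w : List ℤ) : Prop :=
  ∀ i, OccursAt pat w i → (w.take i).sum < 2

def pUUU : List ℤ := [1, 1, 1]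
def pDUD : List ℤ := [-1, 1, -1]
def pUUD : List ℤ := [1, 1, -1]
def pUD : List ℤ := [1, -1]
def pDU : List ℤ := [-1, 1]

/-- The recursive equations defining the paper's map φ from Dyck meanders with
catastrophes to Dyck paths:
φ(ε) = ε; φ(Uα) = UD φ(α); φ(UαDβ) = UUD φ(α) D φ(β);
φ(UαD₂β) = U φ(αD) D φ(β); φ(UαD_iβ) = UD φ(αD_{i-1}) φ(β) for i ≥ 3. -/
def PhiSpec (φ : List ℤ → List ℤ) : Prop :=
  (φ [] = []) ∧
  (∀ α : List ℤ, (∀ s ∈ α, s = 1 ∨ s = -1) → NonnegPrefixes α →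
      φ (1 :: α) = 1 :: -1 :: φ α) ∧
  (∀ α β : List ℤ, (∀ s ∈ α, s = 1 ∨ s = -1) → NonnegPrefixes α → α.sum = 0 →
      IsDyckMeanderCat β →
      φ (1 :: (α ++ -1 :: β)) = 1 :: 1 :: -1 :: (φ α ++ -1 :: φ β)) ∧
  (∀ α β : List ℤ, (∀ s ∈ α, s = 1 ∨ s = -1) → NonnegPrefixes α → α.sum = 1 →
      IsDyckMeanderCat β →
      φ (1 :: (α ++ -2 :: β)) = 1 :: (φ (α ++ [-1]) ++ -1 :: φ β)) ∧
  (∀ (α β : List ℤ) (i : ℕ), 3 ≤ i → (∀ s ∈ α, s = 1 ∨ s = -1) → NonnegPrefixes α →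
      α.sum = (i : ℤ) - 1 → IsDyckMeanderCat β →
      φ (1 :: (α ++ (-(i : ℤ)) :: β)) = 1 :: -1 :: (φ (α ++ [-((i : ℤ) - 1)]) ++ φ β))

open List in
lemma nn_iff (w : List ℤ) : NonnegPrefixes w ↔ ∀ k, 0 ≤ (w.take k).sum := by
  constructor
  · intro h k
    exact h _ (by rw [List.mem_inits]; exact List.take_prefix k w)
  · intro h p hp
    rw [List.mem_inits, List.prefix_iff_eq_take] at hp
    rw [hp]; exact h _

/-- heights stay ≥ -h along w -/
def NNF (h : ℤ) (w : List ℤ) : Prop := ∀ k, 0 ≤ h + (w.take k).sum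

lemma nn_iff' (w : List ℤ) : NonnegPrefixes w ↔ NNF 0 w := by
  rw [nn_iff]; unfold NNF; simp

lemma nnf_nil (h : ℤ) : NNF h [] ↔ 0 ≤ h := by
  unfold NNF; simp

lemma nnf_cons (h c : ℤ) (w : List ℤ) : NNF h (c :: w) ↔ 0 ≤ h ∧ NNF (h + c) w := by
  constructor
  · intro H
    refine ⟨by simpa using H 0, fun k => ?_⟩
    have := H (k + 1)
    simp [List.take_succ_cons] at this ⊢
    linarith
  · rintro ⟨h0, H⟩ k
    cases k with
    | zero => simpa
    | succ k => have := H k; simp [List.take_succ_cons] at this ⊢; linarith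

lemma nnf_append (h : ℤ) (x y : List ℤ) :
    NNF h (x ++ y) ↔ NNF h x ∧ NNF (h + x.sum) y := by
  constructor
  · intro H
    constructor
    · intro k
      have := H (min k x.length)
      rw [List.take_append] at this
      have h1 : min k x.length - x.length = 0 := by omega
      rw [h1] at this
      simp at this
      have h2 : x.take (min k x.length) = x.take k := by
        rw [← List.take_take, List.take_length]
      rw [← h2]; simpa using this
    · intro k
      have := H (x.length + k)
      rw [List.take_append] at this
      have h1 : x.length + k - x.length = k := by omega
      have h2 : x.take (x.length + k) = x := List.take_of_length_le (by omega)
      rw [h1, h2, List.sum_append] at this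
      linarith
  · rintro ⟨H1, H2⟩ k
    rw [List.take_append, List.sum_append]
    by_cases hk : k ≤ x.length
    · have : k - x.length = 0 := by omega
      rw [this]; simpa using H1 k
    · have h2 : x.take k = x := List.take_of_length_le (by omega)
      rw [h2]
      have := H2 (k - x.length)
      linarith

lemma nnf_mono {h h' : ℤ} {w : List ℤ} (H : NNF h w) (hle : h ≤ h') : NNF h' w :=
  fun k => le_trans (H k) (by linarith)

lemma dyck_nil : IsDyckWord [] := by
  refine ⟨by simp, ?_, by simp⟩
  rw [nn_iff]; simp

lemma dyck_to_mcat {w : List ℤ} (hw : IsDyckWord w) : IsDyckMeanderCat w := by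
  obtain ⟨hs, hn, hz⟩ := hw
  refine ⟨fun s hsm => by rcases hs s hsm with h | h <;> omega, hn, fun i hi hle => ?_⟩
  have hm : w.getD i 0 ∈ w := by
    rw [List.getD_eq_getElem w 0 hi]; exact List.getElem_mem hi
  rcases hs _ hm with h | h <;> omega

lemma dyck_closure {a b : List ℤ} (ha : IsDyckWord a) (hb : IsDyckWord b) :
    IsDyckWord (1 :: (a ++ -1 :: b)) := by
  obtain ⟨has, han, haz⟩ := ha
  obtain ⟨hbs, hbn, hbz⟩ := hb
  refine ⟨?_, ?_, ?_⟩
  · intro s hs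
    simp only [List.mem_cons, List.mem_append, List.mem_cons] at hs
    rcases hs with h | h | h | h
    · left; exact h
    · exact has s h
    · right; exact h
    · exact hbs s h
  · rw [nn_iff'] at han hbn ⊢
    rw [nnf_cons, nnf_append, nnf_cons]
    refine ⟨by norm_num, nnf_mono han (by norm_num), by norm_num [haz], ?_⟩
    have : (0:ℤ) + 1 + a.sum + -1 = 0 := by rw [haz]; ring
    rw [this]; exact hbn
  · simp [List.sum_append, haz, hbz]
lemma getD_drop' (w : List ℤ) (i j : ℕ) (d : ℤ) :
    (w.drop i).getD j d = w.getD (i + j) d := by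
  simp [List.getD_eq_getElem?_getD, List.getElem?_drop]

lemma dyck_step {w : List ℤ} (hw : IsDyckWord w) {i : ℕ} (hi : i < w.length) :
    w.getD i 0 = 1 ∨ w.getD i 0 = -1 := by
  apply hw.1
  rw [List.getD_eq_getElem w 0 hi]; exact List.getElem_mem hi

lemma dyck_head {w : List ℤ} (hw : IsDyckWord w) (hne : w ≠ []) : w.getD 0 0 = 1 := by
  have hl : 0 < w.length := List.length_pos_iff.2 hne
  have h1 : (w.take 1).sum = (w.take 0).sum + w[0] := List.sum_take_succ w 0 hl
  have h2 : 0 ≤ (w.take 1).sum := (nn_iff w).1 hw.2.1 1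
  have h3 := dyck_step hw hl
  rw [List.getD_eq_getElem w 0 hl] at h3 ⊢
  simp at h1
  rcases h3 with h | h
  · exact h
  · rw [h] at h1; omega

lemma dyck_last {w : List ℤ} (hw : IsDyckWord w) (hne : w ≠ []) :
    w.getD (w.length - 1) 0 = -1 := by
  have hl : w.length - 1 < w.length := by
    have := List.length_pos_iff.2 hne; omega
  have h1 : (w.take (w.length - 1 + 1)).sum = (w.take (w.length - 1)).sum + w[w.length - 1] :=
    List.sum_take_succ w _ hl
  have he : w.length - 1 + 1 = w.length := by have := List.length_pos_iff.2 hne; omega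
  rw [he, List.take_length, hw.2.2] at h1
  have h2 : 0 ≤ (w.take (w.length - 1)).sum := (nn_iff w).1 hw.2.1 _
  have h3 := dyck_step hw hl
  rw [List.getD_eq_getElem w 0 hl] at h3 ⊢
  rcases h3 with h | h
  · rw [h] at h1; omega
  · exact h

lemma dyck_len_ne_one {w : List ℤ} (hw : IsDyckWord w) : w.length ≠ 1 := by
  intro h
  rcases w with _ | ⟨c, t⟩
  · simp at h
  · have ht : t = [] := by simpa using h
    subst ht
    have h1 : c = 1 := by simpa using dyck_head hw (by simp)
    have h2 := hw.2.2
    norm_num [h1] at h2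

lemma dyck_decomp {w : List ℤ} (hw : IsDyckWord w) (hne : w ≠ []) :
    ∃ α β, IsDyckWord α ∧ IsDyckWord β ∧ w = 1 :: (α ++ -1 :: β) ∧
      w.length = α.length + β.length + 2 := by
  classical
  have hnn : ∀ k, 0 ≤ (w.take k).sum := (nn_iff w).1 hw.2.1
  have hlen : 0 < w.length := List.length_pos_iff.2 hne
  have hex : ∃ k, 1 ≤ k ∧ (w.take k).sum = 0 :=
    ⟨w.length, hlen, by simp [hw.2.2]⟩
  set j := Nat.find hex with hjdef
  obtain ⟨hj1, hj0⟩ := Nat.find_spec hex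
  rw [← hjdef] at hj1 hj0
  have hjle : j ≤ w.length := Nat.find_min' hex ⟨hlen, by simp [hw.2.2]⟩
  have hpos : ∀ m, 1 ≤ m → m < j → 1 ≤ (w.take m).sum := by
    intro m h1 h2
    have hne0 : (w.take m).sum ≠ 0 := fun hm => Nat.find_min hex h2 ⟨h1, hm⟩
    have := hnn m
    omega
  have h2j : 2 ≤ j := by
    rcases Nat.lt_or_ge j 2 with h | h
    · exfalso
      have hj : j = 1 := by omega
      have hl0 : 0 < w.length := hlen
      have := List.sum_take_succ w 0 hl0
      simp at this
      rw [hj] at hj0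
      rw [this] at hj0
      have hs := dyck_step hw hl0
      rw [List.getD_eq_getElem w 0 hl0] at hs
      omega
    · exact h
  -- last step of the take-j prefix is -1 and height before is 1
  have hjl : j - 1 < w.length := by omega
  have hsucc : (w.take (j - 1 + 1)).sum = (w.take (j - 1)).sum + w[j-1] :=
    List.sum_take_succ w _ hjl
  have hje : j - 1 + 1 = j := by omega
  rw [hje, hj0] at hsucc
  have hp1 : 1 ≤ (w.take (j - 1)).sum := hpos (j-1) (by omega) (by omega)
  have hstep : w[j-1] = 1 ∨ w[j-1] = -1 := by
    have := dyck_step hw hjl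
    rwa [List.getD_eq_getElem w 0 hjl] at this
  have hgm1 : w[j-1] = -1 := by rcases hstep with h | h <;> omega
  have hheight : (w.take (j-1)).sum = 1 := by omega
  -- w = 1 :: t
  rcases w with _ | ⟨c, t⟩
  · exact absurd rfl hne
  have hc : c = 1 := by
    have := dyck_head hw (by simp)
    simpa using this
  subst hc
  -- define α and β
  refine ⟨t.take (j-2), t.drop (j-1), ?_, ?_, ?_, ?_⟩
  · -- α is a Dyck word
    have hmem : ∀ s ∈ t.take (j-2), s = 1 ∨ s = -1 := by
      intro s hs
      exact hw.1 s (List.mem_cons_of_mem _ ((List.take_sublist _ _).mem hs))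
    have htk : ∀ k, ((1:ℤ) :: t).take (k+1) = 1 :: t.take k := fun k => rfl
    have hsum : ∀ k, (((1:ℤ) :: t).take (k+1)).sum = 1 + (t.take k).sum := by
      intro k; rw [htk]; simp
    refine ⟨hmem, ?_, ?_⟩
    · rw [nn_iff]
      intro k
      have h1 : (t.take (j-2)).take k = t.take (min k (j-2)) := List.take_take
      rw [h1]
      have h2 := hpos (min k (j-2) + 1) (by omega) (by omega)
      rw [hsum] at h2
      omega
    · have : ((1:ℤ) :: t).take (j-1) = 1 :: t.take (j-2) := by
        have : j - 1 = (j-2) + 1 := by omega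
        rw [this]; rfl
      rw [this] at hheight
      simp at hheight
      omega
  · -- β is a Dyck word
    have hmem : ∀ s ∈ t.drop (j-1), s = 1 ∨ s = -1 := by
      intro s hs
      exact hw.1 s (List.mem_cons_of_mem _ ((List.drop_sublist _ _).mem hs))
    have hdr : ((1:ℤ) :: t).drop j = t.drop (j-1) := by
      have : j = (j-1) + 1 := by omega
      rw [this]; rfl
    have hsplit : ∀ k, (((1:ℤ)::t).take (j + k)).sum
        = (((1:ℤ)::t).take j).sum + ((((1:ℤ)::t).drop j).take k).sum := by
      intro k
      rw [List.take_add, List.sum_append]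
    refine ⟨hmem, ?_, ?_⟩
    · rw [nn_iff]
      intro k
      have := hsplit k
      rw [hj0, hdr] at this
      have h2 := hnn (j + k)
      omega
    · have h1 : (((1:ℤ)::t).drop j).sum = ((1:ℤ)::t).sum - (((1:ℤ)::t).take j).sum := by
        have := List.take_append_drop j ((1:ℤ)::t)
        calc (((1:ℤ)::t).drop j).sum
            = ((((1:ℤ)::t).take j) ++ (((1:ℤ)::t).drop j)).sum - (((1:ℤ)::t).take j).sum := by
              rw [List.sum_append]; ring
          _ = ((1:ℤ)::t).sum - (((1:ℤ)::t).take j).sum := by rw [this]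
      rw [hj0, hw.2.2, hdr] at h1
      simpa using h1
  · -- the decomposition equality
    have hjt : j - 2 < t.length := by
      have : ((1:ℤ)::t).length = t.length + 1 := by simp
      omega
    have hd : t.drop (j-2) = t[j-2] :: t.drop (j-1) := by
      have := List.drop_eq_getElem_cons hjt
      have he2 : j - 2 + 1 = j - 1 := by omega
      rwa [he2] at this
    have hgt : t[j-2] = -1 := by
      have e1 : ((1:ℤ)::t).getD (j-1) 0 = -1 := by
        rw [List.getD_eq_getElem _ _ hjl]; exact hgm1
      have e2 : j - 1 = (j-2) + 1 := by omega
      rw [e2, List.getD_cons_succ] at e1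
      rw [← List.getD_eq_getElem t 0 hjt]; exact e1
    conv_lhs => rw [← List.take_append_drop (j-2) t]
    rw [hd, hgt]
  · -- lengths
    have hjt : j - 2 < t.length := by
      have : ((1:ℤ)::t).length = t.length + 1 := by simp
      omega
    simp only [List.length_cons, List.length_take, List.length_drop]
    omega
lemma avoids_triple_iff (x y z : ℤ) (w : List ℤ) :
    Avoids [x, y, z] w ↔
      ∀ i, i + 2 < w.length →
        ¬(w.getD i 0 = x ∧ w.getD (i+1) 0 = y ∧ w.getD (i+2) 0 = z) := by
  constructor
  · intro h i hi ⟨h1, h2, h3⟩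
    apply h i
    have hlen : 3 ≤ (w.drop i).length := by
      rw [List.length_drop]; omega
    rcases hd : w.drop i with _ | ⟨c, _ | ⟨d, _ | ⟨e, t⟩⟩⟩
    · rw [hd] at hlen; simp at hlen
    · rw [hd] at hlen; simp at hlen
    · rw [hd] at hlen; simp at hlen
    · have g0 : (w.drop i).getD 0 0 = c := by rw [hd]; rfl
      have g1 : (w.drop i).getD 1 0 = d := by rw [hd]; rfl
      have g2 : (w.drop i).getD 2 0 = e := by rw [hd]; rfl
      rw [getD_drop'] at g0 g1 g2
      simp only [Nat.add_zero] at g0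
      rw [h1] at g0
      rw [h2] at g1
      rw [h3] at g2
      refine ⟨t, ?_⟩
      rw [hd, ← g0, ← g1, ← g2]; rfl
  · intro h i ⟨t, ht⟩
    have hlen : (w.drop i).length = t.length + 3 := by
      rw [← ht]; simp
    rw [List.length_drop] at hlen
    have hi2 : i + 2 < w.length := by omega
    apply h i hi2
    have g0 : (w.drop i).getD 0 0 = x := by rw [← ht]; rfl
    have g1 : (w.drop i).getD 1 0 = y := by rw [← ht]; rfl
    have g2 : (w.drop i).getD 2 0 = z := by rw [← ht]; rfl
    rw [getD_drop'] at g0 g1 g2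
    simp only [Nat.add_zero] at g0
    exact ⟨g0, g1, g2⟩

lemma avoids_nil (x y z : ℤ) : Avoids [x, y, z] [] := by
  rw [avoids_triple_iff]
  intro i hi
  simp at hi

/-- the target set -/
def InT (v : List ℤ) : Prop :=
  IsDyckWord v ∧ Avoids pUUU v ∧ Avoids pDUD v ∧ (v = [] ∨ pUUD <+: v)

lemma InT_nil : InT [] :=
  ⟨dyck_nil, avoids_nil _ _ _, avoids_nil _ _ _, Or.inl rfl⟩

lemma pUUD_prefix_iff (v : List ℤ) :
    pUUD <+: v ↔ ∃ t, v = 1 :: 1 :: -1 :: t := by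
  constructor
  · rintro ⟨t, ht⟩
    exact ⟨t, by rw [← ht]; rfl⟩
  · rintro ⟨t, rfl⟩
    exact ⟨t, rfl⟩

/-- key getD facts for nonempty members of T -/
lemma InT_getD {a : List ℤ} (ha : InT a) (hne : a ≠ []) :
    3 ≤ a.length ∧ a.getD 0 0 = 1 ∧ a.getD 1 0 = 1 ∧ a.getD 2 0 = -1 ∧
      a.getD (a.length - 1) 0 = -1 := by
  rcases ha.2.2.2 with h | h
  · exact absurd h hne
  · rw [pUUD_prefix_iff] at h
    obtain ⟨t, rfl⟩ := h
    refine ⟨by simp, rfl, rfl, rfl, dyck_last ha.1 hne⟩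
lemma seam_getD_mid (a b : List ℤ) :
    (a ++ -1 :: b).getD a.length 0 = -1 := by
  rw [List.getD_append_right _ _ _ _ (le_refl a.length)]
  simp

lemma seam_getD_right (a b : List ℤ) (j : ℕ) (hj : a.length < j) :
    (a ++ -1 :: b).getD j 0 = b.getD (j - a.length - 1) 0 := by
  rw [List.getD_append_right _ _ _ _ (le_of_lt hj)]
  obtain ⟨k, hk⟩ : ∃ k, j - a.length = k + 1 := ⟨j - a.length - 1, by omega⟩
  rw [hk, List.getD_cons_succ]
  try congr 1
  try omega

lemma T_closure {a b : List ℤ} (ha : InT a) (hb : InT b) :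
    InT (1 :: 1 :: -1 :: (a ++ -1 :: b)) := by
  have hma : a = [] ∨ 3 ≤ a.length := by
    rcases eq_or_ne a [] with h | h
    · exact Or.inl h
    · exact Or.inr (InT_getD ha h).1
  have hdv : IsDyckWord (1 :: 1 :: -1 :: (a ++ -1 :: b)) := by
    have h1 : IsDyckWord (1 :: ([] ++ -1 :: a)) := dyck_closure dyck_nil ha.1
    simp only [List.nil_append] at h1
    have h2 := dyck_closure h1 hb.1
    simpa using h2
  have hlenv : (1 :: 1 :: -1 :: (a ++ -1 :: b) : List ℤ).length
      = a.length + b.length + 4 := by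
    simp; omega
  refine ⟨hdv, ?_, ?_, Or.inr (by rw [pUUD_prefix_iff]; exact ⟨_, rfl⟩)⟩
  · -- avoids UUU
    show Avoids [1,1,1] _
    rw [avoids_triple_iff]
    rintro (_ | _ | _ | j) hi ⟨h1, h2, h3⟩
    · simp at h3
    · simp at h2
    · simp at h1
    · simp only [show ∀ k, k + 1 + 1 + 1 = k + 3 from fun k => rfl] at h1 h2 h3 hi
      rw [show j + 3 + 1 = (j+1) + 3 from rfl] at h2
      rw [show j + 3 + 2 = (j+2) + 3 from rfl] at h3
      simp only [List.getD_cons_succ] at h1 h2 h3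
      rw [hlenv] at hi
      rcases Nat.lt_or_ge (j+2) a.length with hc | hc
      · -- inside a
        have := (avoids_triple_iff 1 1 1 a).1 ha.2.1 j (by omega)
        rw [List.getD_append _ _ _ _ (show j < a.length by omega)] at h1
        rw [List.getD_append _ _ _ _ (show j + 1 < a.length by omega)] at h2
        rw [List.getD_append _ _ _ _ (show j + 2 < a.length by omega)] at h3
        exact this ⟨h1, h2, h3⟩
      rcases Nat.lt_or_ge (j+2) (a.length + 1) with hc2 | hc2
      · -- j + 2 = a.length
        rw [show j+2 = a.length by omega, seam_getD_mid] at h3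
        norm_num at h3
      rcases Nat.lt_or_ge (j+1) (a.length + 1) with hc3 | hc3
      · rw [show j+1 = a.length by omega, seam_getD_mid] at h2
        norm_num at h2
      rcases Nat.lt_or_ge j (a.length + 1) with hc4 | hc4
      · rw [show j = a.length by omega, seam_getD_mid] at h1
        norm_num at h1
      · -- inside b
        have := (avoids_triple_iff 1 1 1 b).1 hb.2.1 (j - a.length - 1) (by omega)
        rw [seam_getD_right _ _ _ (by omega)] at h1 h2 h3
        rw [show j + 1 - a.length - 1 = (j - a.length - 1) + 1 by omega] at h2
        rw [show j + 2 - a.length - 1 = (j - a.length - 1) + 2 by omega] at h3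
        exact this ⟨h1, h2, h3⟩
  · -- avoids DUD
    show Avoids [-1,1,-1] _
    rw [avoids_triple_iff]
    rintro (_ | _ | _ | j) hi ⟨h1, h2, h3⟩
    · simp at h1
    · simp at h1
    · -- i = 2 : pattern (-1, r0, r1)
      have e2 : ((1:ℤ) :: 1 :: -1 :: (a ++ -1 :: b)).getD (2+1) 0
          = (a ++ -1 :: b).getD 0 0 := rfl
      have e3 : ((1:ℤ) :: 1 :: -1 :: (a ++ -1 :: b)).getD (2+2) 0
          = (a ++ -1 :: b).getD 1 0 := rfl
      rw [e2] at h2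
      rw [e3] at h3
      rcases hma with rfl | hm3
      · simp at h2
      · have hane : a ≠ [] := by intro h; rw [h] at hm3; simp at hm3
        rw [List.getD_append _ _ _ _ (show (0:ℕ) < a.length by omega)] at h2
        rw [List.getD_append _ _ _ _ (show (1:ℕ) < a.length by omega)] at h3
        have hg := InT_getD ha hane
        rw [hg.2.2.1] at h3
        norm_num at h3
    · simp only [show ∀ k, k + 1 + 1 + 1 = k + 3 from fun k => rfl] at h1 h2 h3 hi
      rw [show j + 3 + 1 = (j+1) + 3 from rfl] at h2
      rw [show j + 3 + 2 = (j+2) + 3 from rfl] at h3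
      simp only [List.getD_cons_succ] at h1 h2 h3
      rw [hlenv] at hi
      rcases Nat.lt_or_ge (j+2) a.length with hc | hc
      · have := (avoids_triple_iff (-1) 1 (-1) a).1 ha.2.2.1 j (by omega)
        rw [List.getD_append _ _ _ _ (show j < a.length by omega)] at h1
        rw [List.getD_append _ _ _ _ (show j + 1 < a.length by omega)] at h2
        rw [List.getD_append _ _ _ _ (show j + 2 < a.length by omega)] at h3
        exact this ⟨h1, h2, h3⟩
      rcases Nat.lt_or_ge (j+2) (a.length + 1) with hc2 | hc2
      · -- j + 2 = a.length; middle entry is a's last = -1 but must be 1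
        have hane : a ≠ [] := by
          intro h; rw [h] at hc2; simp at hc2
        rw [List.getD_append _ _ _ _ (by omega),
          show j + 1 = a.length - 1 by omega] at h2
        rw [dyck_last ha.1 hane] at h2
        norm_num at h2
      rcases Nat.lt_or_ge (j+1) (a.length + 1) with hc3 | hc3
      · rw [show j+1 = a.length by omega, seam_getD_mid] at h2
        norm_num at h2
      rcases Nat.lt_or_ge j (a.length + 1) with hc4 | hc4
      · -- j = a.length : pattern (-1, b0, b1)
        have hbne : b ≠ [] := by
          intro h
          rw [h] at hi; simp at hi; omega
        have hg := InT_getD hb hbne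
        rw [seam_getD_right _ _ _ (by omega),
          show j + 2 - a.length - 1 = 1 by omega, hg.2.2.1] at h3
        norm_num at h3
      · have := (avoids_triple_iff (-1) 1 (-1) b).1 hb.2.2.1 (j - a.length - 1) (by omega)
        rw [seam_getD_right _ _ _ (by omega)] at h1 h2 h3
        rw [show j + 1 - a.length - 1 = (j - a.length - 1) + 1 by omega] at h2
        rw [show j + 2 - a.length - 1 = (j - a.length - 1) + 2 by omega] at h3
        exact this ⟨h1, h2, h3⟩
lemma dyck_uud {c : List ℤ} (hd : IsDyckWord c) (hne : c ≠ [])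
    (h1 : c.getD 1 0 ≠ -1) (h2 : 3 ≤ c.length → c.getD 2 0 ≠ 1) : pUUD <+: c := by
  have hl0 : 0 < c.length := List.length_pos_iff.2 hne
  have hl2 : 2 ≤ c.length := by
    have := dyck_len_ne_one hd; omega
  have g0 : c.getD 0 0 = 1 := dyck_head hd hne
  have g1 : c.getD 1 0 = 1 := (dyck_step hd (by omega)).resolve_right h1
  have hs1 := List.sum_take_succ c 0 (show 0 < c.length by omega)
  have hs2 := List.sum_take_succ c 1 (show 1 < c.length by omega)
  rw [List.getD_eq_getElem c 0 (show 0 < c.length by omega)] at g0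
  rw [List.getD_eq_getElem c 0 (show 1 < c.length by omega)] at g1
  have ht2 : (c.take 2).sum = 2 := by
    rw [hs2, hs1, g0, g1]; simp
  rw [← List.getD_eq_getElem c 0 (show 0 < c.length by omega)] at g0
  rw [← List.getD_eq_getElem c 0 (show 1 < c.length by omega)] at g1
  have hl3 : 3 ≤ c.length := by
    rcases Nat.lt_or_ge c.length 3 with h | h
    · exfalso
      have he : c.length = 2 := by omega
      have : c.take 2 = c := List.take_of_length_le (by omega)
      rw [this, hd.2.2] at ht2
      norm_num at ht2
    · exact h
  have g2 : c.getD 2 0 = -1 := (dyck_step hd (by omega)).resolve_left (h2 hl3)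
  rcases c with _ | ⟨x, _ | ⟨y, _ | ⟨z, r⟩⟩⟩
  · simp at hl3
  · simp at hl3
  · simp at hl3
  · simp at g0 g1 g2
    rw [pUUD_prefix_iff]
    exact ⟨r, by rw [g0, g1, g2]⟩

lemma T_decomp {v : List ℤ} (hv : InT v) (hne : v ≠ []) :
    ∃ a b, InT a ∧ InT b ∧ v = 1 :: 1 :: -1 :: (a ++ -1 :: b) ∧
      v.length = a.length + b.length + 4 := by
  obtain ⟨t, rfl⟩ := (pUUD_prefix_iff v).1 (hv.2.2.2.resolve_left hne)
  obtain ⟨hs, hn, hz⟩ := hv.1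
  have hnt : NNF 1 t := by
    rw [nn_iff'] at hn
    rw [nnf_cons, nnf_cons, nnf_cons] at hn
    have := hn.2.2.2
    have he : (0:ℤ) + 1 + 1 + -1 = 1 := by norm_num
    rwa [he] at this
  have hu : IsDyckWord (1 :: t) := by
    refine ⟨?_, ?_, ?_⟩
    · intro s hs'
      apply hs
      simp only [List.mem_cons] at hs' ⊢
      tauto
    · rw [nn_iff', nnf_cons]
      exact ⟨le_refl 0, by rwa [show (0:ℤ) + 1 = 1 by norm_num]⟩
    · simp at hz ⊢
      linarith
  obtain ⟨a, b, hda, hdb, hdec, hlen⟩ := dyck_decomp hu (by simp)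
  have ht : t = a ++ -1 :: b := by
    simpa using hdec
  subst ht
  set m := a.length with hm
  have hlenv : ((1:ℤ) :: 1 :: -1 :: (a ++ -1 :: b)).length = m + b.length + 4 := by
    simp [hm]; omega
  have ev : ∀ k, ((1:ℤ) :: 1 :: -1 :: (a ++ -1 :: b)).getD (k+3) 0
      = (a ++ -1 :: b).getD k 0 := fun k => rfl
  -- avoidance transfers to the factors a and b
  have hauuu : Avoids pUUU a := by
    show Avoids [1,1,1] a
    rw [avoids_triple_iff]
    intro j hj hcon
    refine (avoids_triple_iff 1 1 1 _).1 hv.2.1 (j+3) (by rw [hlenv]; omega) ?_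
    rw [show j + 3 + 1 = (j+1) + 3 from rfl, show j + 3 + 2 = (j+2) + 3 from rfl,
      ev, ev, ev,
      List.getD_append _ _ _ _ (show j < m by omega),
      List.getD_append _ _ _ _ (show j + 1 < m by omega),
      List.getD_append _ _ _ _ (show j + 2 < m by omega)]
    exact hcon
  have hadud : Avoids pDUD a := by
    show Avoids [-1,1,-1] a
    rw [avoids_triple_iff]
    intro j hj hcon
    refine (avoids_triple_iff (-1) 1 (-1) _).1 hv.2.2.1 (j+3) (by rw [hlenv]; omega) ?_
    rw [show j + 3 + 1 = (j+1) + 3 from rfl, show j + 3 + 2 = (j+2) + 3 from rfl,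
      ev, ev, ev,
      List.getD_append _ _ _ _ (show j < m by omega),
      List.getD_append _ _ _ _ (show j + 1 < m by omega),
      List.getD_append _ _ _ _ (show j + 2 < m by omega)]
    exact hcon
  have hbuuu : Avoids pUUU b := by
    show Avoids [1,1,1] b
    rw [avoids_triple_iff]
    intro j hj hcon
    refine (avoids_triple_iff 1 1 1 _).1 hv.2.1 (j+m+4) (by rw [hlenv]; omega) ?_
    rw [show j + m + 4 = (j+m+1) + 3 from by omega, show (j+m+1) + 3 + 1 = (j+m+2) + 3 from rfl,
      show (j+m+1) + 3 + 2 = (j+m+3) + 3 from rfl,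
      ev, ev, ev,
      seam_getD_right _ _ _ (show m < j+m+1 by omega),
      seam_getD_right _ _ _ (show m < j+m+2 by omega),
      seam_getD_right _ _ _ (show m < j+m+3 by omega),
      show j + m + 1 - m - 1 = j from by omega,
      show j + m + 2 - m - 1 = j + 1 from by omega,
      show j + m + 3 - m - 1 = j + 2 from by omega]
    exact hcon
  have hbdud : Avoids pDUD b := by
    show Avoids [-1,1,-1] b
    rw [avoids_triple_iff]
    intro j hj hcon
    refine (avoids_triple_iff (-1) 1 (-1) _).1 hv.2.2.1 (j+m+4) (by rw [hlenv]; omega) ?_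
    rw [show j + m + 4 = (j+m+1) + 3 from by omega, show (j+m+1) + 3 + 1 = (j+m+2) + 3 from rfl,
      show (j+m+1) + 3 + 2 = (j+m+3) + 3 from rfl,
      ev, ev, ev,
      seam_getD_right _ _ _ (show m < j+m+1 by omega),
      seam_getD_right _ _ _ (show m < j+m+2 by omega),
      seam_getD_right _ _ _ (show m < j+m+3 by omega),
      show j + m + 1 - m - 1 = j from by omega,
      show j + m + 2 - m - 1 = j + 1 from by omega,
      show j + m + 3 - m - 1 = j + 2 from by omega]
    exact hcon
  -- start conditions
  have hastart : a = [] ∨ pUUD <+: a := by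
    rcases eq_or_ne a [] with h | h
    · exact Or.inl h
    right
    have hm2 : 2 ≤ m := by
      have h0 := List.length_pos_iff.2 h
      have h1 := dyck_len_ne_one hda
      omega
    have h1 : a.getD 1 0 ≠ -1 := by
      intro hcon
      refine (avoids_triple_iff (-1) 1 (-1) _).1 hv.2.2.1 2 (by rw [hlenv]; omega) ?_
      refine ⟨rfl, ?_, ?_⟩
      · show ((1:ℤ) :: 1 :: -1 :: (a ++ -1 :: b)).getD (0 + 3) 0 = 1
        rw [ev, List.getD_append _ _ _ _ (show 0 < m by omega)]
        exact dyck_head hda h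
      · show ((1:ℤ) :: 1 :: -1 :: (a ++ -1 :: b)).getD (1 + 3) 0 = -1
        rw [ev, List.getD_append _ _ _ _ (show 1 < m by omega)]
        exact hcon
    have h2 : 3 ≤ a.length → a.getD 2 0 ≠ 1 := by
      intro hm3 hcon
      refine (avoids_triple_iff 1 1 1 _).1 hv.2.1 3 (by rw [hlenv]; omega) ?_
      refine ⟨?_, ?_, ?_⟩
      · show ((1:ℤ) :: 1 :: -1 :: (a ++ -1 :: b)).getD (0 + 3) 0 = 1
        rw [ev, List.getD_append _ _ _ _ (show 0 < m by omega)]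
        exact dyck_head hda h
      · show ((1:ℤ) :: 1 :: -1 :: (a ++ -1 :: b)).getD (1 + 3) 0 = 1
        rw [ev, List.getD_append _ _ _ _ (show 1 < m by omega)]
        exact (dyck_step hda (by omega)).resolve_right h1
      · show ((1:ℤ) :: 1 :: -1 :: (a ++ -1 :: b)).getD (2 + 3) 0 = 1
        rw [ev, List.getD_append _ _ _ _ (show 2 < m by omega)]
        exact hcon
    exact dyck_uud hda h h1 h2
  have hbstart : b = [] ∨ pUUD <+: b := by
    rcases eq_or_ne b [] with h | h
    · exact Or.inl h
    right
    have hk2 : 2 ≤ b.length := by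
      have h0 := List.length_pos_iff.2 h
      have h1 := dyck_len_ne_one hdb
      omega
    have h1 : b.getD 1 0 ≠ -1 := by
      intro hcon
      refine (avoids_triple_iff (-1) 1 (-1) _).1 hv.2.2.1 (m+3) (by rw [hlenv]; omega) ?_
      refine ⟨?_, ?_, ?_⟩
      · show ((1:ℤ) :: 1 :: -1 :: (a ++ -1 :: b)).getD (m + 3) 0 = -1
        rw [ev, seam_getD_mid]
      · show ((1:ℤ) :: 1 :: -1 :: (a ++ -1 :: b)).getD ((m+1) + 3) 0 = 1
        rw [ev, seam_getD_right _ _ _ (show m < m + 1 by omega),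
          show m + 1 - m - 1 = 0 from by omega]
        exact dyck_head hdb h
      · show ((1:ℤ) :: 1 :: -1 :: (a ++ -1 :: b)).getD ((m+2) + 3) 0 = -1
        rw [ev, seam_getD_right _ _ _ (show m < m + 2 by omega),
          show m + 2 - m - 1 = 1 from by omega]
        exact hcon
    have h2 : 3 ≤ b.length → b.getD 2 0 ≠ 1 := by
      intro hk3 hcon
      refine (avoids_triple_iff 1 1 1 _).1 hv.2.1 (m+4) (by rw [hlenv]; omega) ?_
      refine ⟨?_, ?_, ?_⟩
      · show ((1:ℤ) :: 1 :: -1 :: (a ++ -1 :: b)).getD ((m+1) + 3) 0 = 1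
        rw [ev, seam_getD_right _ _ _ (show m < m + 1 by omega),
          show m + 1 - m - 1 = 0 from by omega]
        exact dyck_head hdb h
      · show ((1:ℤ) :: 1 :: -1 :: (a ++ -1 :: b)).getD ((m+2) + 3) 0 = 1
        rw [ev, seam_getD_right _ _ _ (show m < m + 2 by omega),
          show m + 2 - m - 1 = 1 from by omega]
        exact (dyck_step hdb (by omega)).resolve_right h1
      · show ((1:ℤ) :: 1 :: -1 :: (a ++ -1 :: b)).getD ((m+3) + 3) 0 = 1
        rw [ev, seam_getD_right _ _ _ (show m < m + 3 by omega),
          show m + 3 - m - 1 = 2 from by omega]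
        exact hcon
    exact dyck_uud hdb h h1 h2
  exact ⟨a, b, ⟨hda, hauuu, hadud, hastart⟩, ⟨hdb, hbuuu, hbdud, hbstart⟩, rfl,
    by rw [hlenv]⟩

lemma dir1 {φ : List ℤ → List ℤ} (hφ : PhiSpec φ) :
    ∀ N w, w.length ≤ N → IsDyckWord w → InT (φ w) ∧ (φ w).length = 2 * w.length := by
  intro N
  induction N with
  | zero =>
    intro w hw hd
    have : w = [] := List.length_eq_zero_iff.1 (by omega)
    subst this
    rw [hφ.1]
    exact ⟨InT_nil, by simp⟩
  | succ N ih =>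
    intro w hw hd
    rcases eq_or_ne w [] with rfl | hne
    · rw [hφ.1]; exact ⟨InT_nil, by simp⟩
    obtain ⟨α, β, hα, hβ, rfl, hlen⟩ := dyck_decomp hd hne
    have hφw := hφ.2.2.1 α β hα.1 hα.2.1 hα.2.2 (dyck_to_mcat hβ)
    obtain ⟨hTα, hlα⟩ := ih α (by omega) hα
    obtain ⟨hTβ, hlβ⟩ := ih β (by omega) hβ
    rw [hφw]
    refine ⟨T_closure hTα hTβ, ?_⟩
    simp only [List.length_cons, List.length_append] at hlen ⊢
    omega

lemma dir2 {φ : List ℤ → List ℤ} (hφ : PhiSpec φ) :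
    ∀ N v, v.length ≤ N → InT v → ∃ w, IsDyckWord w ∧ φ w = v ∧ 2 * w.length = v.length := by
  intro N
  induction N with
  | zero =>
    intro v hv hT
    have : v = [] := List.length_eq_zero_iff.1 (by omega)
    subst this
    exact ⟨[], dyck_nil, hφ.1, by simp⟩
  | succ N ih =>
    intro v hv hT
    rcases eq_or_ne v [] with rfl | hne
    · exact ⟨[], dyck_nil, hφ.1, by simp⟩
    obtain ⟨a, b, hTa, hTb, rfl, hlen⟩ := T_decomp hT hne
    obtain ⟨wa, hwa, hfa, hla⟩ := ih a (by omega) hTa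
    obtain ⟨wb, hwb, hfb, hlb⟩ := ih b (by omega) hTb
    refine ⟨1 :: (wa ++ -1 :: wb), dyck_closure hwa hwb, ?_, ?_⟩
    · rw [hφ.2.2.1 wa wb hwa.1 hwa.2.1 hwa.2.2 (dyck_to_mcat hwb), hfa, hfb]
    · simp only [List.length_cons, List.length_append] at hlen ⊢
      omega


/-- Under the bijection φ, the image of the set of Dyck paths of semilength n is
exactly the set of Dyck paths of semilength 2n avoiding UUU and DUD everywhere and
starting with UUD (or empty). -/
theorem stmt_5 (φ : List ℤ → List ℤ) (hφ : PhiSpec φ) (n : ℕ) :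
    φ '' {w | IsDyckWord w ∧ w.length = 2 * n} =
      {w | IsDyckWord w ∧ w.length = 2 * (2 * n) ∧
        Avoids pUUU w ∧ Avoids pDUD w ∧ (w = [] ∨ pUUD <+: w)} := by
  ext v
  simp only [Set.mem_image, Set.mem_setOf_eq]
  constructor
  · rintro ⟨w, ⟨hd, hl⟩, rfl⟩
    obtain ⟨hT, hlen⟩ := dir1 hφ w.length w le_rfl hd
    exact ⟨hT.1, by omega, hT.2.1, hT.2.2.1, hT.2.2.2⟩
  · rintro ⟨hd, hl, h3, h4, h5⟩
    obtain ⟨w, hw, hfw, hlen⟩ := dir2 hφ v.length v le_rfl ⟨hd, h3, h4, h5⟩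
    exact ⟨w, ⟨hw, by omega⟩, hfw⟩
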